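/- Let c₂ > 0, H_min > 0, and w ∈ ℝ², and define c₁ = sqrt( ( −(2H_min² + c₂) + sqrt(16H_min⁴ + 16c₂H_min² + c₂²) ) / 6 ) and D_u = (2c₂/ln 2) · c₁ / ((c₁² + H_min²)(c₁² + H_min² + c₂)). Then for every altitude h ≥ H_min and every horizontal position p ∈ ℝ², the gradient of the rate function u_h(p) = log₂(1 + c₂/(‖p − w‖² + h²)) satisfies ‖∇u_h(p)‖ ≤ D_u, and this bound is attained (at h = H_min and ‖p − w‖ = c₁), so D_u = max over h ≥ H_min, p ∈ ℝ² of ‖∇u_h(p)‖. -/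

import Mathlib

open Real

private lemma los_grad_aux (c₂ h : ℝ) (hc : 0 < c₂) (hh : 0 < h)
    (w p : EuclideanSpace ℝ (Fin 2)) :
    HasGradientAt (fun x : EuclideanSpace ℝ (Fin 2) =>
        Real.logb 2 (1 + c₂ / (‖x - w‖ ^ 2 + h ^ 2)))
      ((-(2 * c₂) / (Real.log 2 *
        ((‖p - w‖ ^ 2 + h ^ 2) * (‖p - w‖ ^ 2 + h ^ 2 + c₂)))) • (p - w)) p := by
  set s : ℝ := ‖p - w‖ ^ 2 with hs
  have hA : (0 : ℝ) < s + h ^ 2 := by positivity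
  have hlog2 : (0 : ℝ) < Real.log 2 := Real.log_pos (by norm_num)
  -- derivative of the scalar outer function
  have hg : HasDerivAt (fun t : ℝ => 1 + c₂ / (t + h ^ 2))
      ((0 * (s + h ^ 2) - c₂ * 1) / (s + h ^ 2) ^ 2) s := by
    exact ((hasDerivAt_const s c₂).div ((hasDerivAt_id s).add_const (h ^ 2)) hA.ne').const_add 1
  have hgpos : (0 : ℝ) < 1 + c₂ / (s + h ^ 2) := by positivity
  have hφ : HasDerivAt (fun t : ℝ => Real.logb 2 (1 + c₂ / (t + h ^ 2)))
      (((0 * (s + h ^ 2) - c₂ * 1) / (s + h ^ 2) ^ 2 / (1 + c₂ / (s + h ^ 2))) / Real.log 2)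
      s := by
    have := (hg.log hgpos.ne').div_const (Real.log 2)
    simpa [Real.logb] using this
  -- derivative of the inner function ‖x - w‖²
  have hn : HasFDerivAt (fun x : EuclideanSpace ℝ (Fin 2) => ‖x - w‖ ^ 2)
      (2 • (innerSL ℝ (p - w)).comp (ContinuousLinearMap.id ℝ _)) p := by
    exact ((hasFDerivAt_id p).sub_const w).norm_sq
  have hcomp := hφ.comp_hasFDerivAt p hn
  rw [hasGradientAt_iff_hasFDerivAt]
  refine hcomp.congr_fderiv ?_
  symm
  apply ContinuousLinearMap.ext
  intro y
  have hd : ((0 * (s + h ^ 2) - c₂ * 1) / (s + h ^ 2) ^ 2 / (1 + c₂ / (s + h ^ 2))) / Real.log 2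
      = -c₂ / (Real.log 2 * ((s + h ^ 2) * (s + h ^ 2 + c₂))) := by
    field_simp
    ring
  simp only [InnerProductSpace.toDual_apply_apply, ContinuousLinearMap.smul_apply,
    ContinuousLinearMap.comp_apply, ContinuousLinearMap.id_apply, innerSL_apply_apply,
    real_inner_smul_left, two_smul, ContinuousLinearMap.add_apply]
  rw [hd]
  ring

set_option maxHeartbeats 1000000 in
theorem los_rate_gradient_norm_max
    (c₂ Hmin : ℝ) (hc : 0 < c₂) (hH : 0 < Hmin)
    (w : EuclideanSpace ℝ (Fin 2))
    (c₁ : ℝ)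
    (hc₁ : c₁ = Real.sqrt
      ((-(2 * Hmin ^ 2 + c₂) +
        Real.sqrt (16 * Hmin ^ 4 + 16 * c₂ * Hmin ^ 2 + c₂ ^ 2)) / 6))
    (Du : ℝ)
    (hDu : Du = (2 * c₂ / Real.log 2) * c₁ /
      ((c₁ ^ 2 + Hmin ^ 2) * (c₁ ^ 2 + Hmin ^ 2 + c₂))) :
    (∀ h : ℝ, Hmin ≤ h → ∀ p : EuclideanSpace ℝ (Fin 2),
      ‖gradient (fun x : EuclideanSpace ℝ (Fin 2) =>
        Real.logb 2 (1 + c₂ / (‖x - w‖ ^ 2 + h ^ 2))) p‖ ≤ Du) ∧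
    (∃ p : EuclideanSpace ℝ (Fin 2), ‖p - w‖ = c₁ ∧
      ‖gradient (fun x : EuclideanSpace ℝ (Fin 2) =>
        Real.logb 2 (1 + c₂ / (‖x - w‖ ^ 2 + Hmin ^ 2))) p‖ = Du) := by
  have hlog2 : (0 : ℝ) < Real.log 2 := Real.log_pos (by norm_num)
  -- basic facts about c₁
  have hXpos : (0 : ℝ) ≤ 16 * Hmin ^ 4 + 16 * c₂ * Hmin ^ 2 + c₂ ^ 2 := by positivity
  have hSgt : 2 * Hmin ^ 2 + c₂ < Real.sqrt (16 * Hmin ^ 4 + 16 * c₂ * Hmin ^ 2 + c₂ ^ 2) := by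
    rw [Real.lt_sqrt (by positivity)]
    nlinarith [pow_pos hH 2, pow_pos hH 4, mul_pos hc (pow_pos hH 2)]
  have hinner : (0 : ℝ) < (-(2 * Hmin ^ 2 + c₂) +
      Real.sqrt (16 * Hmin ^ 4 + 16 * c₂ * Hmin ^ 2 + c₂ ^ 2)) / 6 := by linarith
  have hc1pos : 0 < c₁ := hc₁ ▸ Real.sqrt_pos.2 hinner
  have hc1sq : c₁ ^ 2 = (-(2 * Hmin ^ 2 + c₂) +
      Real.sqrt (16 * Hmin ^ 4 + 16 * c₂ * Hmin ^ 2 + c₂ ^ 2)) / 6 := by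
    rw [hc₁, Real.sq_sqrt hinner.le]
  have hX : (Real.sqrt (16 * Hmin ^ 4 + 16 * c₂ * Hmin ^ 2 + c₂ ^ 2)) ^ 2
      = 16 * Hmin ^ 4 + 16 * c₂ * Hmin ^ 2 + c₂ ^ 2 := Real.sq_sqrt hXpos
  have hsq' : Real.sqrt (16 * Hmin ^ 4 + 16 * c₂ * Hmin ^ 2 + c₂ ^ 2)
      = 6 * c₁ ^ 2 + (2 * Hmin ^ 2 + c₂) := by linarith
  have hkey : 3 * c₁ ^ 4 + (2 * Hmin ^ 2 + c₂) * c₁ ^ 2 = Hmin ^ 4 + c₂ * Hmin ^ 2 := by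
    rw [hsq'] at hX
    nlinarith [hX]
  have hKpos : (0 : ℝ) < (c₁ ^ 2 + Hmin ^ 2) * (c₁ ^ 2 + Hmin ^ 2 + c₂) := by positivity
  -- the scalar bound
  have hbound : ∀ h : ℝ, Hmin ≤ h → ∀ r : ℝ, 0 ≤ r →
      2 * c₂ / (Real.log 2 * ((r ^ 2 + h ^ 2) * (r ^ 2 + h ^ 2 + c₂))) * r ≤ Du := by
    intro h hhH r hr
    have hh : 0 < h := lt_of_lt_of_le hH hhH
    have hApos : (0 : ℝ) < (r ^ 2 + h ^ 2) * (r ^ 2 + h ^ 2 + c₂) := by positivity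
    have hfact : c₁ * ((r ^ 2 + Hmin ^ 2) * (r ^ 2 + Hmin ^ 2 + c₂))
        - r * ((c₁ ^ 2 + Hmin ^ 2) * (c₁ ^ 2 + Hmin ^ 2 + c₂))
        = c₁ * (r - c₁) ^ 2 * (r ^ 2 + 2 * c₁ * r + 3 * c₁ ^ 2 + 2 * Hmin ^ 2 + c₂) := by
      linear_combination (r - c₁) * hkey
    have hstep1 : r * ((c₁ ^ 2 + Hmin ^ 2) * (c₁ ^ 2 + Hmin ^ 2 + c₂))
        ≤ c₁ * ((r ^ 2 + Hmin ^ 2) * (r ^ 2 + Hmin ^ 2 + c₂)) := by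
      have hnn : 0 ≤ c₁ * (r - c₁) ^ 2 * (r ^ 2 + 2 * c₁ * r + 3 * c₁ ^ 2 + 2 * Hmin ^ 2 + c₂) :=
        by positivity
      linarith [hfact, hnn]
    have hh2 : Hmin ^ 2 ≤ h ^ 2 := by nlinarith
    have hstep2 : c₁ * ((r ^ 2 + Hmin ^ 2) * (r ^ 2 + Hmin ^ 2 + c₂))
        ≤ c₁ * ((r ^ 2 + h ^ 2) * (r ^ 2 + h ^ 2 + c₂)) := by
      have hnn : 0 ≤ (h ^ 2 - Hmin ^ 2) * (2 * r ^ 2 + h ^ 2 + Hmin ^ 2 + c₂) :=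
        mul_nonneg (by linarith) (by positivity)
      nlinarith [hnn, hc1pos.le, mul_nonneg hc1pos.le hnn]
    have hmain : r * ((c₁ ^ 2 + Hmin ^ 2) * (c₁ ^ 2 + Hmin ^ 2 + c₂))
        ≤ c₁ * ((r ^ 2 + h ^ 2) * (r ^ 2 + h ^ 2 + c₂)) := le_trans hstep1 hstep2
    rw [hDu]
    rw [div_mul_eq_mul_div, div_le_div_iff₀ (by positivity) hKpos]
    calc 2 * c₂ * r * ((c₁ ^ 2 + Hmin ^ 2) * (c₁ ^ 2 + Hmin ^ 2 + c₂))
        ≤ 2 * c₂ * (c₁ * ((r ^ 2 + h ^ 2) * (r ^ 2 + h ^ 2 + c₂))) := by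
          have := mul_le_mul_of_nonneg_left hmain (by positivity : (0:ℝ) ≤ 2 * c₂)
          linarith [this]
      _ = 2 * c₂ / Real.log 2 * c₁ * (Real.log 2 * ((r ^ 2 + h ^ 2) * (r ^ 2 + h ^ 2 + c₂))) := by
          field_simp
  have hnormgrad : ∀ h : ℝ, Hmin ≤ h → ∀ p : EuclideanSpace ℝ (Fin 2),
      ‖gradient (fun x : EuclideanSpace ℝ (Fin 2) =>
        Real.logb 2 (1 + c₂ / (‖x - w‖ ^ 2 + h ^ 2))) p‖
      = 2 * c₂ / (Real.log 2 * ((‖p - w‖ ^ 2 + h ^ 2) * (‖p - w‖ ^ 2 + h ^ 2 + c₂)))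
        * ‖p - w‖ := by
    intro h hhH p
    have hh : 0 < h := lt_of_lt_of_le hH hhH
    rw [(los_grad_aux c₂ h hc hh w p).gradient]
    rw [norm_smul, Real.norm_eq_abs, abs_div, abs_neg,
      abs_of_pos (by positivity : (0:ℝ) < 2 * c₂),
      abs_of_pos (by positivity : (0:ℝ) < Real.log 2 *
        ((‖p - w‖ ^ 2 + h ^ 2) * (‖p - w‖ ^ 2 + h ^ 2 + c₂)))]
  constructor
  · intro h hhH p
    rw [hnormgrad h hhH p]
    exact hbound h hhH ‖p - w‖ (norm_nonneg _)
  · refine ⟨w + c₁ • (EuclideanSpace.single (0 : Fin 2) (1 : ℝ)), ?_, ?_⟩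
    · rw [add_sub_cancel_left, norm_smul, Real.norm_eq_abs, abs_of_pos hc1pos,
        EuclideanSpace.norm_single]
      simp
    · have hpw : ‖(w + c₁ • (EuclideanSpace.single (0 : Fin 2) (1 : ℝ))) - w‖ = c₁ := by
        rw [add_sub_cancel_left, norm_smul, Real.norm_eq_abs, abs_of_pos hc1pos,
          EuclideanSpace.norm_single]
        simp
      rw [hnormgrad Hmin le_rfl, hpw, hDu]
      field_simp
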